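/- Let A be an orthogonal array OA_λ(k,n) (k ≥ 2, n ≥ 2, λ ≥ 1) with N = λn² rows containing a row ρ repeated exactly m times, and for each row index i not carrying a copy of ρ let a_i be the number of coordinates in which row i agrees with ρ. Then the sum of the a_i over these N − m rows equals k(λn − m), the sum of a_i(a_i − 1) equals k(k−1)(λ − m), and the sum of a_i² equals k(k(λ−m) + λ(n−1)). -/
import Mathlib


/-- Moment identities for an OA_λ(k,n) with a row ρ repeated exactly m times: letting
a_i be the number of agreements of row i with ρ, the sums over the rows i with
row ≠ ρ of a_i, a_i(a_i−1) and a_i² are k(λn−m), k(k−1)(λ−m) and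
k(k(λ−m)+λ(n−1)) respectively. -/
theorem oa_moment_identities_repeated (k n lam m : ℕ) (hk : 2 ≤ k) (hn : 2 ≤ n)
    (hlam : 1 ≤ lam)
    (A : Fin (lam * n ^ 2) → Fin k → Fin n)
    (hOA : ∀ j j' : Fin k, j ≠ j' → ∀ x y : Fin n,
      (Finset.univ.filter (fun r => A r j = x ∧ A r j' = y)).card = lam)
    (ρ : Fin k → Fin n)
    (hm : (Finset.univ.filter (fun r => A r = ρ)).card = m)
    (a : Fin (lam * n ^ 2) → ℕ)
    (ha : ∀ i, a i = (Finset.univ.filter (fun j => A i j = ρ j)).card) :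
    (∑ i ∈ Finset.univ.filter (fun r => A r ≠ ρ), (a i : ℤ)) =
      (k : ℤ) * ((lam : ℤ) * n - m) ∧
    (∑ i ∈ Finset.univ.filter (fun r => A r ≠ ρ), (a i : ℤ) * ((a i : ℤ) - 1)) =
      (k : ℤ) * ((k : ℤ) - 1) * ((lam : ℤ) - m) ∧
    (∑ i ∈ Finset.univ.filter (fun r => A r ≠ ρ), (a i : ℤ) ^ 2) =
      (k : ℤ) * ((k : ℤ) * ((lam : ℤ) - m) + (lam : ℤ) * ((n : ℤ) - 1)) := by
  classical
  have hk1 : 1 ≤ k := le_trans (by norm_num) hk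
  haveI : Nontrivial (Fin k) := Fin.nontrivial_iff_two_le.mpr hk
  -- single column count
  have hcol : ∀ j : Fin k, (Finset.univ.filter (fun r => A r j = ρ j)).card = lam * n := by
    intro j
    obtain ⟨j', hj'⟩ := exists_ne j
    rw [Finset.card_eq_sum_card_fiberwise (f := fun r => A r j')
      (t := (Finset.univ : Finset (Fin n))) (fun x _ => Finset.mem_univ _)]
    have h : ∀ y : Fin n,
        ((Finset.univ.filter (fun r => A r j = ρ j)).filter (fun r => A r j' = y)).card
          = lam := by
      intro y
      rw [Finset.filter_filter]
      exact hOA j j' hj'.symm (ρ j) y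
    simp only [h, Finset.sum_const, Finset.card_univ, Fintype.card_fin, smul_eq_mul]
    ring
  have hpair : ∀ j j' : Fin k, j ≠ j' →
      (Finset.univ.filter (fun r => A r j = ρ j ∧ A r j' = ρ j')).card = lam :=
    fun j j' h => hOA j j' h (ρ j) (ρ j')
  -- first moment over all rows
  have hS1 : ∑ i, a i = k * (lam * n) := by
    have h1 : ∀ i, a i = ∑ j : Fin k, if A i j = ρ j then 1 else 0 := fun i => by
      rw [ha i, Finset.card_filter]
    simp_rw [h1]
    rw [Finset.sum_comm]
    have h2 : ∀ j : Fin k, (∑ i, if A i j = ρ j then 1 else 0) = lam * n := fun j => by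
      rw [← Finset.card_filter]; exact hcol j
    simp only [h2, Finset.sum_const, Finset.card_univ, Fintype.card_fin, smul_eq_mul]
  -- second moment over all rows
  have hS2 : ∑ i, a i * a i = k * (lam * n) + k * ((k - 1) * lam) := by
    have h1 : ∀ i, a i * a i =
        ∑ j : Fin k, ∑ j' : Fin k, if A i j = ρ j ∧ A i j' = ρ j' then 1 else 0 := by
      intro i
      rw [ha i, Finset.card_filter, Finset.sum_mul_sum]
      refine Finset.sum_congr rfl fun j _ => Finset.sum_congr rfl fun j' _ => ?_
      split_ifs with h1 h2 h3 <;> simp_all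
    simp_rw [h1]
    rw [Finset.sum_comm]
    have h3 : ∀ j : Fin k,
        (∑ i, ∑ j' : Fin k, if A i j = ρ j ∧ A i j' = ρ j' then 1 else 0)
          = lam * n + (k - 1) * lam := by
      intro j
      rw [Finset.sum_comm]
      have h4 : ∀ j' : Fin k,
          (∑ i, if A i j = ρ j ∧ A i j' = ρ j' then 1 else 0)
            = (Finset.univ.filter (fun r => A r j = ρ j ∧ A r j' = ρ j')).card :=
        fun j' => (Finset.card_filter _ _).symm
      simp_rw [h4]
      rw [← Finset.add_sum_erase _ _ (Finset.mem_univ j)]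
      congr 1
      · rw [← hcol j]
        congr 1
        ext r
        simp [and_self]
      · rw [Finset.sum_congr rfl
          (fun j' hj' => hpair j j' (Finset.ne_of_mem_erase hj').symm),
          Finset.sum_const, Finset.card_erase_of_mem (Finset.mem_univ j),
          Finset.card_univ, Fintype.card_fin, smul_eq_mul]
    simp only [h3, Finset.sum_const, Finset.card_univ, Fintype.card_fin, smul_eq_mul]
    ring
  -- rows equal to ρ
  have haρ : ∀ i, A i = ρ → a i = k := by
    intro i h
    rw [ha i]
    have h2 : (Finset.univ.filter (fun j => A i j = ρ j)) = Finset.univ := by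
      apply Finset.filter_true_of_mem
      intro j _
      rw [h]
    rw [h2, Finset.card_univ, Fintype.card_fin]
  -- splitting sums
  have hsplit : ∀ f : Fin (lam * n ^ 2) → ℤ,
      ∑ i ∈ Finset.univ.filter (fun r => A r ≠ ρ), f i
        = ∑ i, f i - ∑ i ∈ Finset.univ.filter (fun r => A r = ρ), f i := by
    intro f
    have h := Finset.sum_filter_add_sum_filter_not Finset.univ (fun r => A r = ρ) f
    have he : Finset.univ.filter (fun r => ¬ A r = ρ)
        = Finset.univ.filter (fun r => A r ≠ ρ) := rfl
    rw [he] at h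
    linarith [h]
  -- cast totals
  have T1 : (∑ i, (a i : ℤ)) = (k : ℤ) * lam * n := by
    rw [← Nat.cast_sum, hS1]; push_cast; ring
  have T2 : (∑ i, (a i : ℤ) ^ 2) = (k : ℤ) * lam * n + (k : ℤ) * (((k : ℤ) - 1) * lam) := by
    have : (∑ i, (a i : ℤ) ^ 2) = ((∑ i, a i * a i : ℕ) : ℤ) := by
      rw [Nat.cast_sum]
      exact Finset.sum_congr rfl fun i _ => by push_cast; ring
    rw [this, hS2]
    push_cast [Nat.cast_sub hk1]
    ring
  -- sums over rows equal to ρ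
  have Tρ1 : (∑ i ∈ Finset.univ.filter (fun r => A r = ρ), (a i : ℤ)) = (m : ℤ) * k := by
    rw [Finset.sum_congr rfl (fun i hi => by
      rw [haρ i (Finset.mem_filter.mp hi).2]), Finset.sum_const, hm]
    push_cast; ring
  have Tρ2 : (∑ i ∈ Finset.univ.filter (fun r => A r = ρ), (a i : ℤ) ^ 2)
      = (m : ℤ) * k ^ 2 := by
    rw [Finset.sum_congr rfl (fun i hi => by
      rw [haρ i (Finset.mem_filter.mp hi).2]), Finset.sum_const, hm]
    push_cast; ring
  have E1 : (∑ i ∈ Finset.univ.filter (fun r => A r ≠ ρ), (a i : ℤ))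
      = (k : ℤ) * ((lam : ℤ) * n - m) := by
    rw [hsplit, T1, Tρ1]; ring
  have E3 : (∑ i ∈ Finset.univ.filter (fun r => A r ≠ ρ), (a i : ℤ) ^ 2)
      = (k : ℤ) * ((k : ℤ) * ((lam : ℤ) - m) + (lam : ℤ) * ((n : ℤ) - 1)) := by
    rw [hsplit, T2, Tρ2]; ring
  refine ⟨E1, ?_, E3⟩
  have : (∑ i ∈ Finset.univ.filter (fun r => A r ≠ ρ), (a i : ℤ) * ((a i : ℤ) - 1))
      = (∑ i ∈ Finset.univ.filter (fun r => A r ≠ ρ), (a i : ℤ) ^ 2)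
        - ∑ i ∈ Finset.univ.filter (fun r => A r ≠ ρ), (a i : ℤ) := by
    rw [← Finset.sum_sub_distrib]
    exact Finset.sum_congr rfl fun i _ => by ring
  rw [this, E1, E3]
  ring
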